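/- arXiv:2602.04425 — 4 statements merged into one kernel-verified Lean document; each statement's English description precedes it below -/
import Mathlib

section
/- Let 𝒟 and 𝒞 be categories and L, R : 𝒟 ⥤ 𝒞 functors such that the pairing (L, R) : 𝒟 ⥤ 𝒞 × 𝒞 is a Grothendieck fibration. Then every morphism φ : X ⟶ Y of 𝒟 that is strongly cartesian with respect to (L, R) over a pair of the form (u, 𝟙_{R(Y)}) is strongly cartesian with respect to L over u. Consequently, for every object Y of 𝒟 and every morphism u : A ⟶ L(Y) in 𝒞, a cartesian lift of u to Y with respect to L can be chosen that is simultaneously a strongly cartesian lift of (u, 𝟙_{R(Y)}) with respect to (L, R). -/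
open CategoryTheory

section Aux

variable {𝒟 : Type*} {𝒞 : Type*} [Category 𝒟] [Category 𝒞] (F G : 𝒟 ⥤ 𝒞)

lemma pair_isHomLift_fst {X Y : 𝒟} {P Q : 𝒞 × 𝒞} (f : P ⟶ Q) (φ : X ⟶ Y)
    (hf : (F.prod' G).IsHomLift f φ) : F.IsHomLift f.1 φ := by
  obtain ⟨⟩ := hf
  exact inferInstanceAs (F.IsHomLift (F.map φ) φ)

lemma pair_isHomLift_snd {X Y : 𝒟} {P Q : 𝒞 × 𝒞} (f : P ⟶ Q) (φ : X ⟶ Y)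
    (hf : (F.prod' G).IsHomLift f φ) : G.IsHomLift f.2 φ := by
  obtain ⟨⟩ := hf
  exact inferInstanceAs (G.IsHomLift (G.map φ) φ)

lemma pair_isHomLift_of {X Y : 𝒟} {P Q : 𝒞} {P' Q' : 𝒞} (f : P ⟶ Q) (g : P' ⟶ Q')
    (φ : X ⟶ Y) (hf : F.IsHomLift f φ) (hg : G.IsHomLift g φ) :
    (F.prod' G).IsHomLift ((f, g) : ((P, P') : 𝒞 × 𝒞) ⟶ (Q, Q')) φ := by
  obtain ⟨⟩ := hf
  obtain ⟨⟩ := hg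
  exact inferInstanceAs ((F.prod' G).IsHomLift ((F.prod' G).map φ) φ)

lemma pair_strongly_cartesian_fst {X Y : 𝒟} (φ : X ⟶ Y) {A : 𝒞} (u : A ⟶ F.obj Y)
    (hφ : (F.prod' G).IsStronglyCartesian
        (((u, 𝟙 (G.obj Y))) : ((A, G.obj Y) : 𝒞 × 𝒞) ⟶ (F.obj Y, G.obj Y)) φ) :
    F.IsStronglyCartesian u φ := by
  haveI := hφ
  refine { toIsHomLift := pair_isHomLift_fst F G _ φ hφ.toIsHomLift,
           universal_property' := ?_ }
  intro Z g ψ hψ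
  haveI : (F.prod' G).IsHomLift
      (((g ≫ u, G.map ψ)) : ((F.obj Z, G.obj Z) : 𝒞 × 𝒞) ⟶ (F.obj Y, G.obj Y)) ψ :=
    pair_isHomLift_of F G (g ≫ u) (G.map ψ) ψ hψ inferInstance
  obtain ⟨χ, ⟨hχl, hχc⟩, hχu⟩ :=
    Functor.IsStronglyCartesian.universal_property (p := F.prod' G)
      (f := ((u, 𝟙 (G.obj Y)) : ((A, G.obj Y) : 𝒞 × 𝒞) ⟶ (F.obj Y, G.obj Y))) (φ := φ)
      ((g, G.map ψ) : ((F.obj Z, G.obj Z) : 𝒞 × 𝒞) ⟶ (A, G.obj Y))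
      (((g ≫ u, G.map ψ)) : ((F.obj Z, G.obj Z) : 𝒞 × 𝒞) ⟶ (F.obj Y, G.obj Y))
      (by simp [prod_comp]) ψ
  refine ⟨χ, ⟨pair_isHomLift_fst F G _ χ hχl, hχc⟩, ?_⟩
  rintro χ' ⟨hχ'l, hχ'c⟩
  -- show χ' lies over (g, G.map ψ) w.r.t. the pairing
  haveI hsnd : G.IsHomLift (G.map ψ) χ' := by
    haveI : G.IsHomLift (𝟙 (G.obj Y)) φ :=
      pair_isHomLift_snd F G _ φ hφ.toIsHomLift
    haveI h1 : G.IsHomLift (G.map χ') ψ := by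
      rw [← hχ'c]
      exact CategoryTheory.IsHomLift.comp_lift_id_right' G (G.map χ') χ' (G.obj Y) φ
    have hb : G.obj X = G.obj Y :=
      (CategoryTheory.IsHomLift.codomain_eq G (G.map χ') ψ).symm
    refine CategoryTheory.IsHomLift.of_fac' G (G.map ψ) χ' rfl hb ?_
    have := CategoryTheory.IsHomLift.fac' G (G.map χ') ψ
    simp only [eqToHom_refl, Category.id_comp] at this ⊢
    rw [this, Category.assoc, eqToHom_trans, eqToHom_refl, Category.comp_id]
  exact hχu χ' ⟨pair_isHomLift_of F G g (G.map ψ) χ' hχ'l hsnd, hχ'c⟩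

end Aux

/-- If the pairing `(L, R) : 𝒟 ⥤ 𝒞 × 𝒞` is a Grothendieck fibration, then
every morphism `φ : X ⟶ Y` of `𝒟` that is strongly cartesian with respect to `(L, R)` over a
pair `(u, 𝟙_{R(Y)})` is strongly cartesian with respect to `L` over `u`; consequently every
`u : A ⟶ L(Y)` admits a cartesian lift to `Y` with respect to `L` which is simultaneously a
strongly cartesian lift of `(u, 𝟙_{R(Y)})` with respect to `(L, R)`. -/
theorem left_fibration_lifts_from_pair {𝒟 : Type*} {𝒞 : Type*}
    [Category 𝒟] [Category 𝒞] (L R : 𝒟 ⥤ 𝒞)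
    (h : (L.prod' R).IsFibered) :
    (∀ {X Y : 𝒟} (φ : X ⟶ Y) {A : 𝒞} (u : A ⟶ L.obj Y),
      (L.prod' R).IsStronglyCartesian
        (((u, 𝟙 (R.obj Y))) : ((A, R.obj Y) : 𝒞 × 𝒞) ⟶ (L.obj Y, R.obj Y)) φ →
      L.IsStronglyCartesian u φ) ∧
    (∀ (Y : 𝒟) {A : 𝒞} (u : A ⟶ L.obj Y),
      ∃ (X : 𝒟) (φ : X ⟶ Y),
        (L.prod' R).IsStronglyCartesian
          (((u, 𝟙 (R.obj Y))) : ((A, R.obj Y) : 𝒞 × 𝒞) ⟶ (L.obj Y, R.obj Y)) φ ∧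
        L.IsStronglyCartesian u φ) := by
  haveI := h
  constructor
  · intro X Y φ A u hφ
    exact pair_strongly_cartesian_fst L R φ u hφ
  · intro Y A u
    obtain ⟨X, φ, hφ⟩ := CategoryTheory.IsPreFibered.exists_isCartesian (L.prod' R)
      (a := Y) (ha := rfl)
      ((u, 𝟙 (R.obj Y)) : ((A, R.obj Y) : 𝒞 × 𝒞) ⟶ (L.obj Y, R.obj Y))
    haveI := hφ
    haveI hsc : (L.prod' R).IsStronglyCartesian
        (((u, 𝟙 (R.obj Y))) : ((A, R.obj Y) : 𝒞 × 𝒞) ⟶ (L.obj Y, R.obj Y)) φ :=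
      inferInstance
    exact ⟨X, φ, hsc, pair_strongly_cartesian_fst L R φ u hsc⟩
end

section
/- Let p : ℰ ⥤ ℬ be a Grothendieck fibration, I a category, F : I ⥤ ℰ a diagram, N an object of ℰ, and φ a cone over F with apex N (a natural transformation from the constant functor at N to F). Then there exist a functor F' : I ⥤ ℰ all of whose objects and morphisms lie over p(N) and identities of p(N) respectively (i.e. F' factors through the fiber of p over p(N)), a natural transformation γ : F' ⟶ F whose component γ_x at each object x of I is strongly cartesian over p(φ_x), and a cone ψ over F' with apex N whose components lie over 𝟙_{p(N)}, such that φ_x = γ_x ∘ ψ_x for every object x of I. -/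
open CategoryTheory

section Aux

set_option linter.unusedSectionVars false

open CategoryTheory.Functor CategoryTheory.Functor.IsPreFibered
  CategoryTheory.Functor.IsStronglyCartesian

variable {ℰ ℬ : Type*} [Category ℰ] [Category ℬ]
    (p : ℰ ⥤ ℬ) [p.IsFibered]
    {I : Type*} [Category I] (F : I ⥤ ℰ) (N : ℰ)
    (φ : (Functor.const I).obj N ⟶ F)

/-- The domain of the chosen strongly cartesian lift. -/
noncomputable def auxObj (x : I) : ℰ :=
  pullbackObj (rfl : p.obj (F.obj x) = p.obj (F.obj x)) (p.map (φ.app x))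

lemma auxObj_proj (x : I) : p.obj (auxObj p F N φ x) = p.obj N :=
  pullbackObj_proj rfl (p.map (φ.app x))

/-- The chosen strongly cartesian lift of `p.map (φ.app x)` with codomain `F.obj x`. -/
noncomputable def auxGamma (x : I) : auxObj p F N φ x ⟶ F.obj x :=
  pullbackMap rfl (p.map (φ.app x))

instance auxGamma_strong (x : I) :
    p.IsStronglyCartesian (p.map (φ.app x)) (auxGamma p F N φ x) := by
  unfold auxGamma; exact @Functor.IsFibered.isStronglyCartesian_of_isCartesian _ _ _ _ p _ _ _ _ _ _ _ (pullbackMap.IsCartesian rfl (p.map (φ.app x)))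

lemma aux_base_eq {x y : I} (f : x ⟶ y) :
    p.map (φ.app x) ≫ p.map (F.map f) = 𝟙 (p.obj N) ≫ p.map (φ.app y) := by
  rw [Category.id_comp, ← p.map_comp]
  congr 1
  have := φ.naturality f
  simpa using this.symm

/-- The map of `F'`. -/
noncomputable def auxMap {x y : I} (f : x ⟶ y) : auxObj p F N φ x ⟶ auxObj p F N φ y :=
  IsStronglyCartesian.map p (p.map (φ.app y)) (auxGamma p F N φ y)
    (aux_base_eq p F N φ f) (auxGamma p F N φ x ≫ F.map f)

instance auxMap_homLift {x y : I} (f : x ⟶ y) :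
    p.IsHomLift (𝟙 (p.obj N)) (auxMap p F N φ f) :=
  IsStronglyCartesian.map_isHomLift p (p.map (φ.app y)) (auxGamma p F N φ y)
    (aux_base_eq p F N φ f) (auxGamma p F N φ x ≫ F.map f)

lemma auxMap_fac {x y : I} (f : x ⟶ y) :
    auxMap p F N φ f ≫ auxGamma p F N φ y = auxGamma p F N φ x ≫ F.map f :=
  IsStronglyCartesian.fac p (p.map (φ.app y)) (auxGamma p F N φ y)
    (aux_base_eq p F N φ f) (auxGamma p F N φ x ≫ F.map f)

/-- The functor `F'` lying in the fiber over `p.obj N`. -/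
noncomputable def auxF' : I ⥤ ℰ where
  obj x := auxObj p F N φ x
  map {x y} f := auxMap p F N φ f
  map_id x := by
    have h0 : p.IsHomLift (𝟙 (p.obj N)) (𝟙 (auxObj p F N φ x)) :=
      IsHomLift.id (auxObj_proj p F N φ x)
    apply IsStronglyCartesian.ext p (p.map (φ.app x)) (auxGamma p F N φ x) (𝟙 (p.obj N))
    rw [auxMap_fac]
    simp
  map_comp {x y z} f g := by
    apply IsStronglyCartesian.ext p (p.map (φ.app z)) (auxGamma p F N φ z) (𝟙 (p.obj N))
    rw [auxMap_fac, Category.assoc, auxMap_fac, ← Category.assoc, auxMap_fac,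
      Category.assoc, ← F.map_comp]

/-- The natural transformation `γ : F' ⟶ F`. -/
noncomputable def auxGammaNat : auxF' p F N φ ⟶ F where
  app x := auxGamma p F N φ x
  naturality x y f := auxMap_fac p F N φ f

/-- The component of the cone `ψ`. -/
noncomputable def auxPsiApp (x : I) : N ⟶ auxObj p F N φ x :=
  IsStronglyCartesian.map p (p.map (φ.app x)) (auxGamma p F N φ x)
    (Category.id_comp _).symm (φ.app x)

instance auxPsiApp_homLift (x : I) : p.IsHomLift (𝟙 (p.obj N)) (auxPsiApp p F N φ x) :=
  IsStronglyCartesian.map_isHomLift p (p.map (φ.app x)) (auxGamma p F N φ x)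
    (Category.id_comp _).symm (φ.app x)

lemma auxPsiApp_fac (x : I) : auxPsiApp p F N φ x ≫ auxGamma p F N φ x = φ.app x :=
  IsStronglyCartesian.fac p (p.map (φ.app x)) (auxGamma p F N φ x)
    (Category.id_comp _).symm (φ.app x)

/-- The cone `ψ` over `F'`. -/
noncomputable def auxPsi : (Functor.const I).obj N ⟶ auxF' p F N φ where
  app x := auxPsiApp p F N φ x
  naturality x y f := by
    simp only [Functor.const_obj_obj, Functor.const_obj_map, Category.id_comp]
    show 𝟙 N ≫ auxPsiApp p F N φ y = auxPsiApp p F N φ x ≫ auxMap p F N φ f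
    rw [Category.id_comp]
    apply IsStronglyCartesian.ext p (p.map (φ.app y)) (auxGamma p F N φ y) (𝟙 (p.obj N))
    rw [auxPsiApp_fac, Category.assoc, auxMap_fac, ← Category.assoc, auxPsiApp_fac]
    have := φ.naturality f
    simpa using this

end Aux

/-- Let `p : ℰ ⥤ ℬ` be a fibration, `F : I ⥤ ℰ` a diagram, `N` an object
of `ℰ` and `φ` a cone over `F` with apex `N`.  Then there is a diagram `F' : I ⥤ ℰ` lying in
the fiber over `p(N)` (objects over `p(N)`, morphisms over `𝟙_{p(N)}`), a natural
transformation `γ : F' ⟶ F` whose components are strongly cartesian over the `p(φ_x)`, and a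
cone `ψ` over `F'` with apex `N` whose components lie over `𝟙_{p(N)}`, such that
`φ_x = γ_x ∘ ψ_x` for every `x`. -/
theorem cone_restricts_to_fiber {ℰ ℬ : Type*} [Category ℰ] [Category ℬ]
    (p : ℰ ⥤ ℬ) [p.IsFibered]
    {I : Type*} [Category I] (F : I ⥤ ℰ) (N : ℰ)
    (φ : (Functor.const I).obj N ⟶ F) :
    ∃ (F' : I ⥤ ℰ) (γ : F' ⟶ F) (ψ : (Functor.const I).obj N ⟶ F'),
      (∀ x : I, p.obj (F'.obj x) = p.obj N) ∧
      (∀ {x y : I} (f : x ⟶ y), p.IsHomLift (𝟙 (p.obj N)) (F'.map f)) ∧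
      (∀ x : I, p.IsStronglyCartesian (p.map (φ.app x)) (γ.app x)) ∧
      (∀ x : I, p.IsHomLift (𝟙 (p.obj N)) (ψ.app x)) ∧
      (∀ x : I, φ.app x = ψ.app x ≫ γ.app x) := by
  exact ⟨auxF' p F N φ, auxGammaNat p F N φ, auxPsi p F N φ,
    fun x => auxObj_proj p F N φ x,
    fun {x y} f => auxMap_homLift p F N φ f,
    fun x => auxGamma_strong p F N φ x,
    fun x => auxPsiApp_homLift p F N φ x,
    fun x => (auxPsiApp_fac p F N φ x).symm⟩
end

section
/- Let R be a commutative ring, 𝒞 a category, ℳ a set of objects of 𝒞 (the models), and F, G : 𝒞 ⥤ Ch(Mod_R) functors into non-negatively graded chain complexes of R-modules. Assume F is free on ℳ: there exist an index set A, objects M_α ∈ ℳ for α ∈ A, and for each i ≥ 0 subsets B^i_α ⊆ F_i(M_α), such that for every object X of 𝒞 the family of elements F_i(u)(b), indexed by triples (α ∈ A, u : M_α ⟶ X, b ∈ B^i_α), is a basis of the R-module F_i(X). Assume G is acyclic on ℳ: for every M ∈ ℳ and every i ≥ 1, H_i(G(M)) = 0. Then for every natural transformation τ̄₀ : H₀ ∘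 F ⟶ H₀ ∘ G there exists a natural transformation τ : F ⟶ G inducing it in degree-0 homology, i.e. H₀(τ_X) = (τ̄₀)_X for every object X of 𝒞. -/
open CategoryTheory Limits

universe w v u


section AMTAux

variable {R : Type u} [CommRing R]

/-- elementwise composition in `ModuleCat` -/
private lemma amt_comp_apply {M N P : ModuleCat.{u} R} (f : M ⟶ N) (g : N ⟶ P) (x : M) :
    (f ≫ g) x = g (f x) := rfl

/-- The projection `C.X 0 ⟶ C.homology 0` for a chain complex. -/
noncomputable def amtPi0 (C : ChainComplex (ModuleCat.{u} R) ℕ) :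
    C.X 0 ⟶ C.homology 0 :=
  C.pOpcycles 0 ≫ (ChainComplex.isoHomologyι₀ C).inv

lemma amtPi0_epi (C : ChainComplex (ModuleCat.{u} R) ℕ) : Epi (amtPi0 C) := by
  unfold amtPi0; infer_instance

lemma amtPi0_surjective (C : ChainComplex (ModuleCat.{u} R) ℕ) :
    Function.Surjective (amtPi0 C) :=
  (ModuleCat.epi_iff_surjective _).1 (amtPi0_epi C)

lemma amtPi0_d (C : ChainComplex (ModuleCat.{u} R) ℕ) (x : C.X 1) :
    amtPi0 C (C.d 1 0 x) = 0 := by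
  have h : (C.d 1 0 ≫ amtPi0 C) x = 0 := by
    unfold amtPi0
    rw [← Category.assoc, C.d_pOpcycles, zero_comp]
    rfl
  exact h

lemma amtPi0_ker (C : ChainComplex (ModuleCat.{u} R) ℕ) (x : C.X 0)
    (hx : amtPi0 C x = 0) : ∃ y, C.d 1 0 y = x := by
  have hp : C.pOpcycles 0 x = 0 := by
    have h1 : (ChainComplex.isoHomologyι₀ C).hom (amtPi0 C x) = C.pOpcycles 0 x := by
      have := ConcreteCategory.congr_hom (ChainComplex.isoHomologyι₀ C).inv_hom_id (C.pOpcycles 0 x)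
      exact this
    rw [hx, map_zero] at h1
    exact h1.symm
  have hc := C.opcyclesIsCokernel 1 0 (by simp [ChainComplex.prev])
  set q := (LinearMap.range (C.d 1 0).hom).mkQ with hqdef
  have hq : C.d 1 0 ≫ ModuleCat.ofHom q = 0 := by
    ext z
    show q (C.d 1 0 z) = 0
    simp [hqdef, Submodule.Quotient.mk_eq_zero]
  let u := hc.desc (CokernelCofork.ofπ (ModuleCat.ofHom q) hq)
  have hu : C.pOpcycles 0 ≫ u = ModuleCat.ofHom q := hc.fac _ WalkingParallelPair.one
  have hq0 : q x = 0 := by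
    have h2 : u (C.pOpcycles 0 x) = q x := ConcreteCategory.congr_hom hu x
    rw [hp, map_zero] at h2
    exact h2.symm
  rwa [← LinearMap.mem_ker, Submodule.ker_mkQ, LinearMap.mem_range] at hq0

lemma amtPi0_naturality {K L : ChainComplex (ModuleCat.{u} R) ℕ} (φ : K ⟶ L) :
    φ.f 0 ≫ amtPi0 L = amtPi0 K ≫ HomologicalComplex.homologyMap φ 0 := by
  unfold amtPi0
  rw [Category.assoc, ChainComplex.isoHomologyι₀_inv_naturality]
  rw [← Category.assoc, ← Category.assoc, HomologicalComplex.p_opcyclesMap]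

lemma amtPi0_exact (C : ChainComplex (ModuleCat.{u} R) ℕ) (n : ℕ)
    (h : IsZero (C.homology (n + 1))) (z : C.X (n + 1)) (hz : C.d (n + 1) n z = 0) :
    ∃ y, C.d (n + 2) (n + 1) y = z := by
  have he : (C.sc' (n + 2) (n + 1) n).Exact := by
    rw [← C.exactAt_iff' (n + 2) (n + 1) n (by simp [ChainComplex.prev])
        (by simp [ChainComplex.next_nat_succ]),
      C.exactAt_iff_isZero_homology]
    exact h
  rw [ShortComplex.moduleCat_exact_iff] at he
  exact he z hz

variable {𝒞 : Type*} [Category 𝒞]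
  (F G : 𝒞 ⥤ ChainComplex (ModuleCat.{u} R) ℕ)
  (ι : Type w) (Mo : ι → 𝒞)
  (Bs : ∀ (i : ℕ) (a : ι), Set ((F.obj (Mo a)).X i))
  (hfree : ∀ (X : 𝒞) (i : ℕ),
      LinearIndependent R
        (fun t : Σ (a : ι) (_ : Mo a ⟶ X), Bs i a => ((F.map t.2.1).f i) t.2.2.1) ∧
      Submodule.span R
        (Set.range
          (fun t : Σ (a : ι) (_ : Mo a ⟶ X), Bs i a => ((F.map t.2.1).f i) t.2.2.1)) = ⊤)

/-- The basis of `F_i(X)` coming from freeness. -/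
noncomputable def amtBasis (i : ℕ) (X : 𝒞) :
    Module.Basis (Σ (a : ι) (_ : Mo a ⟶ X), Bs i a) R ((F.obj X).X i) :=
  Module.Basis.mk (hfree X i).1 (hfree X i).2.ge

lemma amtBasis_apply (i : ℕ) (X : 𝒞) (t : Σ (a : ι) (_ : Mo a ⟶ X), Bs i a) :
    amtBasis F ι Mo Bs hfree i X t = (F.map t.2.1).f i t.2.2.1 :=
  Module.Basis.mk_apply _ _ _

/-- The degree `i` component determined by values `v` on basis elements. -/
noncomputable def amtPhi (i : ℕ) (v : ∀ a : ι, Bs i a → ((G.obj (Mo a)).X i)) (X : 𝒞) :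
    (F.obj X).X i ⟶ (G.obj X).X i :=
  ModuleCat.ofHom ((amtBasis F ι Mo Bs hfree i X).constr R fun t => (G.map t.2.1).f i (v t.1 t.2.2))

lemma amtPhi_apply (i : ℕ) (v : ∀ a : ι, Bs i a → ((G.obj (Mo a)).X i)) {X : 𝒞}
    (a : ι) (u : Mo a ⟶ X) (b : Bs i a) :
    amtPhi F G ι Mo Bs hfree i v X ((F.map u).f i b.1) = (G.map u).f i (v a b) := by
  have h : ((F.map u).f i b.1 : (F.obj X).X i) =
      amtBasis F ι Mo Bs hfree i X ⟨a, u, b⟩ := (amtBasis_apply F ι Mo Bs hfree i X ⟨a, u, b⟩).symm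
  rw [h]
  exact Module.Basis.constr_basis _ _ _ _

lemma amt_map_comp_apply {H : 𝒞 ⥤ ChainComplex (ModuleCat.{u} R) ℕ} {X Y Z : 𝒞}
    (w : X ⟶ Y) (u : Y ⟶ Z) (i : ℕ) (x : (H.obj X).X i) :
    (H.map (w ≫ u)).f i x = (H.map u).f i ((H.map w).f i x) := by
  rw [H.map_comp]
  rfl

lemma amtPhi_natural (i : ℕ) (v : ∀ a : ι, Bs i a → ((G.obj (Mo a)).X i)) {X Y : 𝒞}
    (u : X ⟶ Y) :
    (F.map u).f i ≫ amtPhi F G ι Mo Bs hfree i v Y =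
      amtPhi F G ι Mo Bs hfree i v X ≫ (G.map u).f i := by
  apply ModuleCat.hom_ext
  apply Module.Basis.ext (amtBasis F ι Mo Bs hfree i X)
  rintro ⟨a, w, b⟩
  rw [amtBasis_apply]
  show amtPhi F G ι Mo Bs hfree i v Y ((F.map u).f i ((F.map w).f i b.1)) =
    (G.map u).f i (amtPhi F G ι Mo Bs hfree i v X ((F.map w).f i b.1))
  rw [← amt_map_comp_apply, amtPhi_apply, amtPhi_apply, amt_map_comp_apply]

/-- elementwise chain map commutation -/
lemma amt_comm_apply {K L : ChainComplex (ModuleCat.{u} R) ℕ} (φ : K ⟶ L) (i j : ℕ)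
    (x : K.X i) : L.d i j (φ.f i x) = φ.f j (K.d i j x) := by
  have := ConcreteCategory.congr_hom (φ.comm i j) x
  exact this

/-- The key solvability condition at level `i`. -/
def amtKey (i : ℕ) (v : ∀ a : ι, Bs i a → ((G.obj (Mo a)).X i)) : Prop :=
  ∀ (a : ι) (x : (F.obj (Mo a)).X (i + 1)),
    ∃ y : (G.obj (Mo a)).X (i + 1),
      (G.obj (Mo a)).d (i + 1) i y =
        amtPhi F G ι Mo Bs hfree i v (Mo a) ((F.obj (Mo a)).d (i + 1) i x)

lemma amtChain (i : ℕ) (v : ∀ a : ι, Bs i a → ((G.obj (Mo a)).X i))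
    (v' : ∀ a : ι, Bs (i + 1) a → ((G.obj (Mo a)).X (i + 1)))
    (hlink : ∀ (a : ι) (b : Bs (i + 1) a),
      (G.obj (Mo a)).d (i + 1) i (v' a b) =
        amtPhi F G ι Mo Bs hfree i v (Mo a) ((F.obj (Mo a)).d (i + 1) i b.1))
    (X : 𝒞) :
    amtPhi F G ι Mo Bs hfree (i + 1) v' X ≫ (G.obj X).d (i + 1) i =
      (F.obj X).d (i + 1) i ≫ amtPhi F G ι Mo Bs hfree i v X := by
  apply ModuleCat.hom_ext
  apply Module.Basis.ext (amtBasis F ι Mo Bs hfree (i + 1) X)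
  rintro ⟨a, w, b⟩
  rw [amtBasis_apply]
  show (G.obj X).d (i + 1) i (amtPhi F G ι Mo Bs hfree (i + 1) v' X ((F.map w).f (i + 1) b.1)) =
    amtPhi F G ι Mo Bs hfree i v X ((F.obj X).d (i + 1) i ((F.map w).f (i + 1) b.1))
  rw [amtPhi_apply, amt_comm_apply (G.map w) (i + 1) i, hlink,
    amt_comm_apply (F.map w) (i + 1) i]
  have hnat := ConcreteCategory.congr_hom
    (amtPhi_natural F G ι Mo Bs hfree i v w) ((F.obj (Mo a)).d (i + 1) i b.1)
  exact hnat.symm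

lemma amtKeyStep (hacyclic : ∀ (a : ι) (i : ℕ), 1 ≤ i → IsZero ((G.obj (Mo a)).homology i))
    (i : ℕ) (v : ∀ a : ι, Bs i a → ((G.obj (Mo a)).X i))
    (v' : ∀ a : ι, Bs (i + 1) a → ((G.obj (Mo a)).X (i + 1)))
    (hlink : ∀ (a : ι) (b : Bs (i + 1) a),
      (G.obj (Mo a)).d (i + 1) i (v' a b) =
        amtPhi F G ι Mo Bs hfree i v (Mo a) ((F.obj (Mo a)).d (i + 1) i b.1)) :
    amtKey F G ι Mo Bs hfree (i + 1) v' := by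
  intro a x
  apply amtPi0_exact (G.obj (Mo a)) i (hacyclic a (i + 1) (by omega))
  -- show d (Phi (i+1) v' (d x)) = 0
  have hc := ConcreteCategory.congr_hom (amtChain F G ι Mo Bs hfree i v v' hlink (Mo a))
    ((F.obj (Mo a)).d (i + 2) (i + 1) x)
  have hc' : (G.obj (Mo a)).d (i + 1) i
      (amtPhi F G ι Mo Bs hfree (i + 1) v' (Mo a) ((F.obj (Mo a)).d (i + 2) (i + 1) x)) =
      amtPhi F G ι Mo Bs hfree i v (Mo a)
        ((F.obj (Mo a)).d (i + 1) i ((F.obj (Mo a)).d (i + 2) (i + 1) x)) := hc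
  rw [hc']
  have hdd : (F.obj (Mo a)).d (i + 1) i ((F.obj (Mo a)).d (i + 2) (i + 1) x) = 0 := by
    have := ConcreteCategory.congr_hom ((F.obj (Mo a)).d_comp_d (i + 2) (i + 1) i) x
    exact this
  rw [hdd, map_zero]


lemma amtCompat0
    (τ₀ : F ⋙ HomologicalComplex.homologyFunctor (ModuleCat.{u} R) (ComplexShape.down ℕ) 0 ⟶
          G ⋙ HomologicalComplex.homologyFunctor (ModuleCat.{u} R) (ComplexShape.down ℕ) 0)
    (v0 : ∀ a : ι, Bs 0 a → ((G.obj (Mo a)).X 0))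
    (hv0 : ∀ (a : ι) (b : Bs 0 a),
      amtPi0 (G.obj (Mo a)) (v0 a b) = τ₀.app (Mo a) (amtPi0 (F.obj (Mo a)) b.1))
    (X : 𝒞) :
    amtPhi F G ι Mo Bs hfree 0 v0 X ≫ amtPi0 (G.obj X) =
      amtPi0 (F.obj X) ≫ τ₀.app X := by
  apply ModuleCat.hom_ext
  apply Module.Basis.ext (amtBasis F ι Mo Bs hfree 0 X)
  rintro ⟨a, u, b⟩
  rw [amtBasis_apply]
  show amtPi0 (G.obj X) (amtPhi F G ι Mo Bs hfree 0 v0 X ((F.map u).f 0 b.1)) =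
    τ₀.app X (amtPi0 (F.obj X) ((F.map u).f 0 b.1))
  rw [amtPhi_apply]
  have hG := ConcreteCategory.congr_hom (amtPi0_naturality (G.map u)) (v0 a b)
  have hG' : amtPi0 (G.obj X) ((G.map u).f 0 (v0 a b)) =
      HomologicalComplex.homologyMap (G.map u) 0 (amtPi0 (G.obj (Mo a)) (v0 a b)) := hG
  have hF := ConcreteCategory.congr_hom (amtPi0_naturality (F.map u)) b.1
  have hF' : amtPi0 (F.obj X) ((F.map u).f 0 b.1) =
      HomologicalComplex.homologyMap (F.map u) 0 (amtPi0 (F.obj (Mo a)) b.1) := hF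
  rw [hG', hF', hv0]
  have hτ := ConcreteCategory.congr_hom (τ₀.naturality u) (amtPi0 (F.obj (Mo a)) b.1)
  have hτ' : τ₀.app X (HomologicalComplex.homologyMap (F.map u) 0 (amtPi0 (F.obj (Mo a)) b.1)) =
      HomologicalComplex.homologyMap (G.map u) 0
        (τ₀.app (Mo a) (amtPi0 (F.obj (Mo a)) b.1)) := hτ
  exact hτ'.symm

lemma amtKey0
    (τ₀ : F ⋙ HomologicalComplex.homologyFunctor (ModuleCat.{u} R) (ComplexShape.down ℕ) 0 ⟶
          G ⋙ HomologicalComplex.homologyFunctor (ModuleCat.{u} R) (ComplexShape.down ℕ) 0)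
    (v0 : ∀ a : ι, Bs 0 a → ((G.obj (Mo a)).X 0))
    (hv0 : ∀ (a : ι) (b : Bs 0 a),
      amtPi0 (G.obj (Mo a)) (v0 a b) = τ₀.app (Mo a) (amtPi0 (F.obj (Mo a)) b.1)) :
    amtKey F G ι Mo Bs hfree 0 v0 := by
  intro a x
  apply amtPi0_ker
  have hc := ConcreteCategory.congr_hom (amtCompat0 F G ι Mo Bs hfree τ₀ v0 hv0 (Mo a))
    ((F.obj (Mo a)).d 1 0 x)
  have hc' : amtPi0 (G.obj (Mo a))
      (amtPhi F G ι Mo Bs hfree 0 v0 (Mo a) ((F.obj (Mo a)).d 1 0 x)) =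
      τ₀.app (Mo a) (amtPi0 (F.obj (Mo a)) ((F.obj (Mo a)).d 1 0 x)) := hc
  rw [hc', amtPi0_d]
  exact map_zero _

end AMTAux

/-- (Acyclic model theorem, existence part.)  Let `R` be a commutative
ring, `𝒞` a category, `ℳ` a set of models, and `F, G : 𝒞 ⥤ Ch(Mod_R)` functors into
non-negatively graded chain complexes of `R`-modules.  Assume `F` is free on `ℳ`: there are
an index set `ι`, models `Mo a ∈ ℳ`, and subsets `Bs i a ⊆ F_i(Mo a)` such that for every
`X` the family `F_i(u)(b)` indexed by `(a : ι, u : Mo a ⟶ X, b ∈ Bs i a)` is a basis of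
`F_i(X)`; and `G` is acyclic on `ℳ`: `H_i(G(M)) = 0` for `M ∈ ℳ`, `i ≥ 1`.  Then every
natural transformation `τ₀ : H₀ ∘ F ⟶ H₀ ∘ G` is induced by a natural transformation
`τ : F ⟶ G`. -/
theorem acyclic_models_existence {R : Type u} [CommRing R] {𝒞 : Type*} [Category 𝒞]
    (ℳ : Set 𝒞)
    (F G : 𝒞 ⥤ ChainComplex (ModuleCat.{u} R) ℕ)
    (ι : Type w) (Mo : ι → 𝒞) (hMo : ∀ a : ι, Mo a ∈ ℳ)
    (Bs : ∀ (i : ℕ) (a : ι), Set ((F.obj (Mo a)).X i))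
    (hfree : ∀ (X : 𝒞) (i : ℕ),
      LinearIndependent R
        (fun t : Σ (a : ι) (_ : Mo a ⟶ X), Bs i a => ((F.map t.2.1).f i) t.2.2.1) ∧
      Submodule.span R
        (Set.range
          (fun t : Σ (a : ι) (_ : Mo a ⟶ X), Bs i a => ((F.map t.2.1).f i) t.2.2.1)) = ⊤)
    (hacyclic : ∀ M ∈ ℳ, ∀ i : ℕ, 1 ≤ i → IsZero ((G.obj M).homology i))
    (τ₀ : F ⋙ HomologicalComplex.homologyFunctor (ModuleCat.{u} R) (ComplexShape.down ℕ) 0 ⟶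
          G ⋙ HomologicalComplex.homologyFunctor (ModuleCat.{u} R) (ComplexShape.down ℕ) 0) :
    ∃ τ : F ⟶ G, ∀ X : 𝒞,
      (HomologicalComplex.homologyFunctor (ModuleCat.{u} R) (ComplexShape.down ℕ) 0).map
        (τ.app X) = τ₀.app X := by
  classical
  have hsur : ∀ (a : ι) (b : Bs 0 a), ∃ wg : (G.obj (Mo a)).X 0,
      amtPi0 (G.obj (Mo a)) wg = τ₀.app (Mo a) (amtPi0 (F.obj (Mo a)) b.1) :=
    fun a b => amtPi0_surjective (G.obj (Mo a)) _
  choose v0 hv0 using hsur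
  have key0 := amtKey0 F G ι Mo Bs hfree τ₀ v0 hv0
  have hacyclic' : ∀ (a : ι) (i : ℕ), 1 ≤ i → IsZero ((G.obj (Mo a)).homology i) :=
    fun a i hi => hacyclic (Mo a) (hMo a) i hi
  let S : ∀ i : ℕ, Σ' vv : ∀ a : ι, Bs i a → ((G.obj (Mo a)).X i),
      amtKey F G ι Mo Bs hfree i vv :=
    fun i => Nat.rec
      (motive := fun i => Σ' vv : ∀ a : ι, Bs i a → ((G.obj (Mo a)).X i),
        amtKey F G ι Mo Bs hfree i vv)
      ⟨v0, key0⟩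
      (fun i p => ⟨fun a b => (p.2 a b.1).choose,
        amtKeyStep F G ι Mo Bs hfree hacyclic' i p.1 _
          (fun a b => (p.2 a b.1).choose_spec)⟩) i
  have hlink : ∀ (i : ℕ) (a : ι) (b : Bs (i + 1) a),
      (G.obj (Mo a)).d (i + 1) i ((S (i + 1)).1 a b) =
        amtPhi F G ι Mo Bs hfree i (S i).1 (Mo a) ((F.obj (Mo a)).d (i + 1) i b.1) :=
    fun i a b => ((S i).2 a b.1).choose_spec
  have chain : ∀ (i : ℕ) (X : 𝒞),
      amtPhi F G ι Mo Bs hfree (i + 1) (S (i + 1)).1 X ≫ (G.obj X).d (i + 1) i =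
        (F.obj X).d (i + 1) i ≫ amtPhi F G ι Mo Bs hfree i (S i).1 X :=
    fun i X => amtChain F G ι Mo Bs hfree i (S i).1 (S (i + 1)).1 (hlink i) X
  let τ : F ⟶ G :=
    { app := fun X =>
        { f := fun i => amtPhi F G ι Mo Bs hfree i (S i).1 X
          comm' := by
            intro i j hij
            obtain rfl : j + 1 = i := hij
            exact chain j X }
      naturality := by
        intro X Y u
        apply HomologicalComplex.hom_ext
        intro n
        exact amtPhi_natural F G ι Mo Bs hfree n (S n).1 u }
  refine ⟨τ, fun X => ?_⟩
  show HomologicalComplex.homologyMap (τ.app X) 0 = τ₀.app X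
  haveI : Epi (amtPi0 (F.obj X)) := amtPi0_epi _
  apply (cancel_epi (amtPi0 (F.obj X))).1
  exact (amtPi0_naturality (τ.app X)).symm.trans (amtCompat0 F G ι Mo Bs hfree τ₀ v0 hv0 X)
end

section
/- Let R be a commutative ring, 𝒞 a category, ℳ a set of objects of 𝒞, and F, G : 𝒞 ⥤ Ch(Mod_R) functors into non-negatively graded chain complexes of R-modules, with F free on ℳ and G acyclic on ℳ. If τ, τ' : F ⟶ G are natural transformations inducing the same map in degree-0 homology (H₀(τ_X) = H₀(τ'_X) for every object X), then there is a natural chain homotopy between them: for every object X of 𝒞 a chain homotopy h_X from τ_X to τ'_X, with components (h_X)_i : F_i(X) → G_{i+1}(X), such that for every morphism u : X ⟶ Y and every i ≥ 0 one has G_{i+1}(u) ∘ (h_X)_i = (h_Y)_i ∘ F_i(u). -/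
open CategoryTheory Limits

universe w v u

namespace AcyclicModelsAux
open HomologicalComplex
variable {R : Type u} [CommRing R] {𝒞 : Type*} [Category 𝒞]
lemma lift_exactAt (K : ChainComplex (ModuleCat.{u} R) ℕ) (i : ℕ)
    (hz : IsZero (K.homology (i+1))) (x : K.X (i+1)) (hx : K.d (i+1) i x = 0) :
    ∃ y, K.d (i+2) (i+1) y = x := by
  have hex : K.ExactAt (i+1) := (K.exactAt_iff_isZero_homology (i+1)).2 hz
  rw [HomologicalComplex.exactAt_iff' K (i+2) (i+1) i (by simp [ChainComplex.prev])
    (by simp [ChainComplex.next_nat_succ])] at hex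
  rw [ShortComplex.moduleCat_exact_iff] at hex
  exact hex x hx

lemma lift_deg0 (K L : ChainComplex (ModuleCat.{u} R) ℕ) (φ : K ⟶ L)
    (h : homologyMap φ 0 = 0) (x : K.X 0) :
    ∃ y : L.X 1, L.d 1 0 y = (φ.f 0) x := by
  set ψ := ((shortComplexFunctor (ModuleCat.{u} R) (ComplexShape.down ℕ) 0).map φ) with hψ
  have hΨ : ShortComplex.homologyMap ψ = 0 := h
  set S₁ := K.sc 0 with hS₁
  set S₂ := L.sc 0 with hS₂
  have hg1 : S₁.g = 0 := by
    show K.d 0 _ = 0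
    apply K.shape
    simp [ChainComplex.next_nat_zero]
  have hg2 : S₂.g = 0 := by
    show L.d 0 _ = 0
    apply L.shape
    simp [ChainComplex.next_nat_zero]
  have hx : S₁.g x = 0 := by rw [hg1]; rfl
  set z : S₁.cycles := S₁.moduleCatCyclesIso.inv ⟨x, hx⟩ with hz
  have hx2 : S₂.g (ψ.τ₂ x) = 0 := by rw [hg2]; rfl
  have hw : ShortComplex.cyclesMap ψ z = S₂.moduleCatCyclesIso.inv ⟨ψ.τ₂ x, hx2⟩ := by
    have hinj : Function.Injective S₂.iCycles := by
      rw [← ModuleCat.mono_iff_injective]; infer_instance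
    apply hinj
    have e1 : S₂.iCycles (ShortComplex.cyclesMap ψ z) = ψ.τ₂ (S₁.iCycles z) := by
      rw [← CategoryTheory.comp_apply, ShortComplex.cyclesMap_i, CategoryTheory.comp_apply]
    have e2 : S₁.iCycles z = x := by
      rw [hz]; exact congrArg (fun (f : S₁.moduleCatLeftHomologyData.K ⟶ S₁.X₂) => f ⟨x, hx⟩) S₁.moduleCatCyclesIso_inv_iCycles
    have e3 : S₂.iCycles (S₂.moduleCatCyclesIso.inv ⟨ψ.τ₂ x, hx2⟩) = ψ.τ₂ x := by
      exact congrArg (fun (f : S₂.moduleCatLeftHomologyData.K ⟶ S₂.X₂) => f ⟨ψ.τ₂ x, hx2⟩) S₂.moduleCatCyclesIso_inv_iCycles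
    rw [e1, e2, e3]
  -- homology class computation
  have e5 : S₂.homologyπ (ShortComplex.cyclesMap ψ z) = 0 := by
    rw [← CategoryTheory.comp_apply, ← ShortComplex.homologyπ_naturality, hΨ]; simp
  rw [hw] at e5
  have e6 : S₂.homologyπ (S₂.moduleCatCyclesIso.inv ⟨ψ.τ₂ x, hx2⟩) =
      S₂.moduleCatHomologyIso.inv (S₂.moduleCatLeftHomologyData.π ⟨ψ.τ₂ x, hx2⟩) := by
    exact congrArg (fun (f : S₂.moduleCatLeftHomologyData.K ⟶ S₂.homology) => f ⟨ψ.τ₂ x, hx2⟩) S₂.moduleCatCyclesIso_inv_π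
  rw [e6] at e5
  have hinj2 : Function.Injective S₂.moduleCatHomologyIso.inv := by
    rw [← ModuleCat.mono_iff_injective]; infer_instance
  have e7 : S₂.moduleCatLeftHomologyData.π ⟨ψ.τ₂ x, hx2⟩ = 0 := by
    apply hinj2
    rw [e5]; simp
  obtain ⟨y, hy⟩ := (Submodule.Quotient.mk_eq_zero _ ).1 e7
  have hfy : S₂.f y = ψ.τ₂ x := congrArg Subtype.val hy
  have hp : (ComplexShape.down ℕ).prev 0 = 1 := ChainComplex.prev ℕ 0
  refine ⟨(L.XIsoOfEq hp).hom y, ?_⟩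
  exact (congrArg (fun (f : L.X _ ⟶ L.X 0) => f y) (L.XIsoOfEq_hom_comp_d hp 0)).trans hfy

variable {F G : 𝒞 ⥤ ChainComplex (ModuleCat.{u} R) ℕ}
variable {ι : Type w} {Mo : ι → 𝒞} {Bs : ∀ (i : ℕ) (a : ι), Set ((F.obj (Mo a)).X i)}

noncomputable def myBasis
    (hfree : ∀ (X : 𝒞) (i : ℕ),
      LinearIndependent R
        (fun t : Σ (a : ι) (_ : Mo a ⟶ X), Bs i a => ((F.map t.2.1).f i) t.2.2.1) ∧
      Submodule.span R
        (Set.range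
          (fun t : Σ (a : ι) (_ : Mo a ⟶ X), Bs i a => ((F.map t.2.1).f i) t.2.2.1)) = ⊤)
    (X : 𝒞) (i : ℕ) :
    Module.Basis (Σ (a : ι) (_ : Mo a ⟶ X), Bs i a) R ((F.obj X).X i) :=
  Module.Basis.mk (hfree X i).1 (hfree X i).2.ge

lemma myBasis_apply (hfree : ∀ (X : 𝒞) (i : ℕ),
      LinearIndependent R
        (fun t : Σ (a : ι) (_ : Mo a ⟶ X), Bs i a => ((F.map t.2.1).f i) t.2.2.1) ∧
      Submodule.span R
        (Set.range
          (fun t : Σ (a : ι) (_ : Mo a ⟶ X), Bs i a => ((F.map t.2.1).f i) t.2.2.1)) = ⊤)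
    (X : 𝒞) (i : ℕ) (t : Σ (a : ι) (_ : Mo a ⟶ X), Bs i a) :
    myBasis hfree X i t = ((F.map t.2.1).f i) t.2.2.1 := by
  unfold myBasis
  exact Module.Basis.mk_apply _ _ _

variable (G) in
noncomputable def mkH
    (hfree : ∀ (X : 𝒞) (i : ℕ),
      LinearIndependent R
        (fun t : Σ (a : ι) (_ : Mo a ⟶ X), Bs i a => ((F.map t.2.1).f i) t.2.2.1) ∧
      Submodule.span R
        (Set.range
          (fun t : Σ (a : ι) (_ : Mo a ⟶ X), Bs i a => ((F.map t.2.1).f i) t.2.2.1)) = ⊤)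
    (i : ℕ) (s : ∀ a : ι, Bs i a → (G.obj (Mo a)).X (i+1)) (X : 𝒞) :
    (F.obj X).X i ⟶ (G.obj X).X (i+1) :=
  ModuleCat.ofHom ((myBasis hfree X i).constr ℕ (fun t => (G.map t.2.1).f (i+1) (s t.1 t.2.2)))

lemma mkH_basis (hfree : ∀ (X : 𝒞) (i : ℕ),
      LinearIndependent R
        (fun t : Σ (a : ι) (_ : Mo a ⟶ X), Bs i a => ((F.map t.2.1).f i) t.2.2.1) ∧
      Submodule.span R
        (Set.range
          (fun t : Σ (a : ι) (_ : Mo a ⟶ X), Bs i a => ((F.map t.2.1).f i) t.2.2.1)) = ⊤)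
    (i : ℕ) (s : ∀ a : ι, Bs i a → (G.obj (Mo a)).X (i+1))
    {X : 𝒞} (t : Σ (a : ι) (_ : Mo a ⟶ X), Bs i a) :
    mkH G hfree i s X (myBasis hfree X i t) = (G.map t.2.1).f (i+1) (s t.1 t.2.2) := by
  unfold mkH
  exact Module.Basis.constr_basis _ _ _ _

lemma mkH_natural (hfree : ∀ (X : 𝒞) (i : ℕ),
      LinearIndependent R
        (fun t : Σ (a : ι) (_ : Mo a ⟶ X), Bs i a => ((F.map t.2.1).f i) t.2.2.1) ∧
      Submodule.span R
        (Set.range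
          (fun t : Σ (a : ι) (_ : Mo a ⟶ X), Bs i a => ((F.map t.2.1).f i) t.2.2.1)) = ⊤)
    (i : ℕ) (s : ∀ a : ι, Bs i a → (G.obj (Mo a)).X (i+1))
    {X Y : 𝒞} (u : X ⟶ Y) :
    mkH G hfree i s X ≫ (G.map u).f (i+1) = (F.map u).f i ≫ mkH G hfree i s Y := by
  apply ModuleCat.hom_ext
  apply Module.Basis.ext (myBasis hfree X i)
  rintro ⟨a, v, b⟩
  show ((G.map u).f (i+1)) (mkH G hfree i s X ((myBasis hfree X i) ⟨a, v, b⟩))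
      = mkH G hfree i s Y (((F.map u).f i) ((myBasis hfree X i) ⟨a, v, b⟩))
  rw [mkH_basis hfree i s ⟨a, v, b⟩]
  have h2 : ((F.map u).f i) ((myBasis hfree X i) ⟨a, v, b⟩)
      = (myBasis hfree Y i) ⟨a, v ≫ u, b⟩ := by
    rw [myBasis_apply, myBasis_apply]
    show ((F.map u).f i) (((F.map v).f i) b.1) = ((F.map (v ≫ u)).f i) b.1
    rw [F.map_comp]
    simp only [HomologicalComplex.comp_f, CategoryTheory.comp_apply, Function.comp_apply]
  rw [h2, mkH_basis hfree i s ⟨a, v ≫ u, b⟩]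
  show ((G.map u).f (i+1)) (((G.map v).f (i+1)) (s a b)) = ((G.map (v ≫ u)).f (i+1)) (s a b)
  rw [G.map_comp]
  simp only [HomologicalComplex.comp_f, CategoryTheory.comp_apply, Function.comp_apply]

lemma mkH_comp_d (hfree : ∀ (X : 𝒞) (i : ℕ),
      LinearIndependent R
        (fun t : Σ (a : ι) (_ : Mo a ⟶ X), Bs i a => ((F.map t.2.1).f i) t.2.2.1) ∧
      Submodule.span R
        (Set.range
          (fun t : Σ (a : ι) (_ : Mo a ⟶ X), Bs i a => ((F.map t.2.1).f i) t.2.2.1)) = ⊤)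
    (i : ℕ) (s : ∀ a : ι, Bs i a → (G.obj (Mo a)).X (i+1))
    (E : ∀ X : 𝒞, (F.obj X).X i ⟶ (G.obj X).X i)
    (hE : ∀ {X Y : 𝒞} (u : X ⟶ Y), E X ≫ (G.map u).f i = (F.map u).f i ≫ E Y)
    (hs : ∀ (a : ι) (b : Bs i a), (G.obj (Mo a)).d (i+1) i (s a b) = E (Mo a) b.1)
    (X : 𝒞) :
    mkH G hfree i s X ≫ (G.obj X).d (i+1) i = E X := by
  apply ModuleCat.hom_ext
  apply Module.Basis.ext (myBasis hfree X i)
  rintro ⟨a, v, b⟩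
  show (G.obj X).d (i+1) i (mkH G hfree i s X ((myBasis hfree X i) ⟨a, v, b⟩))
      = E X ((myBasis hfree X i) ⟨a, v, b⟩)
  rw [mkH_basis hfree i s ⟨a, v, b⟩]
  have h2 := congrArg (fun (f : (G.obj (Mo a)).X (i+1) ⟶ (G.obj X).X i) => f (s a b))
    ((G.map v).comm (i+1) i)
  simp only [CategoryTheory.comp_apply, Function.comp_apply] at h2
  rw [h2, hs a b]
  have h3 := congrArg (fun (f : (F.obj (Mo a)).X i ⟶ (G.obj X).X i) => f b.1) (hE v)
  simp only [CategoryTheory.comp_apply, Function.comp_apply] at h3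
  rw [myBasis_apply]
  exact h3

lemma delta_nat (τ τ' : F ⟶ G) (i : ℕ) {X Y : 𝒞} (u : X ⟶ Y) :
    ((τ.app X).f i - (τ'.app X).f i) ≫ (G.map u).f i
      = (F.map u).f i ≫ ((τ.app Y).f i - (τ'.app Y).f i) := by
  have h1 : (τ.app X).f i ≫ (G.map u).f i = (F.map u).f i ≫ (τ.app Y).f i := by
    rw [← HomologicalComplex.comp_f, ← HomologicalComplex.comp_f, τ.naturality u]
  have h2 : (τ'.app X).f i ≫ (G.map u).f i = (F.map u).f i ≫ (τ'.app Y).f i := by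
    rw [← HomologicalComplex.comp_f, ← HomologicalComplex.comp_f, τ'.naturality u]
  rw [Preadditive.sub_comp, Preadditive.comp_sub, h1, h2]


lemma existsZero (hfree : ∀ (X : 𝒞) (i : ℕ),
      LinearIndependent R
        (fun t : Σ (a : ι) (_ : Mo a ⟶ X), Bs i a => ((F.map t.2.1).f i) t.2.2.1) ∧
      Submodule.span R
        (Set.range
          (fun t : Σ (a : ι) (_ : Mo a ⟶ X), Bs i a => ((F.map t.2.1).f i) t.2.2.1)) = ⊤)
    (τ τ' : F ⟶ G)
    (hδ0 : ∀ (a : ι) (x : (F.obj (Mo a)).X 0), ∃ y : (G.obj (Mo a)).X 1,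
        (G.obj (Mo a)).d 1 0 y = (τ.app (Mo a)).f 0 x - (τ'.app (Mo a)).f 0 x) :
    ∃ H0 : ∀ X : 𝒞, (F.obj X).X 0 ⟶ (G.obj X).X 1,
      (∀ {X Y : 𝒞} (u : X ⟶ Y), H0 X ≫ (G.map u).f 1 = (F.map u).f 0 ≫ H0 Y) ∧
      (∀ X : 𝒞, H0 X ≫ (G.obj X).d 1 0 = (τ.app X).f 0 - (τ'.app X).f 0) := by
  set s : ∀ a : ι, Bs 0 a → (G.obj (Mo a)).X 1 := fun a b => (hδ0 a b.1).choose with hsdef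
  have hs : ∀ (a : ι) (b : Bs 0 a), (G.obj (Mo a)).d 1 0 (s a b)
      = ((τ.app (Mo a)).f 0 - (τ'.app (Mo a)).f 0) b.1 := fun a b => (hδ0 a b.1).choose_spec
  refine ⟨mkH G hfree 0 s, fun {X Y} u => mkH_natural hfree 0 s u, fun X => ?_⟩
  exact mkH_comp_d hfree 0 s (fun X => (τ.app X).f 0 - (τ'.app X).f 0)
    (fun {X Y} u => delta_nat τ τ' 0 u) hs X

lemma existsStep (hfree : ∀ (X : 𝒞) (i : ℕ),
      LinearIndependent R
        (fun t : Σ (a : ι) (_ : Mo a ⟶ X), Bs i a => ((F.map t.2.1).f i) t.2.2.1) ∧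
      Submodule.span R
        (Set.range
          (fun t : Σ (a : ι) (_ : Mo a ⟶ X), Bs i a => ((F.map t.2.1).f i) t.2.2.1)) = ⊤)
    (τ τ' : F ⟶ G)
    (hacy : ∀ (a : ι) (j : ℕ), IsZero ((G.obj (Mo a)).homology (j+1)))
    (i : ℕ) (Hp : ∀ X : 𝒞, (F.obj X).X i ⟶ (G.obj X).X (i+1))
    (hn : ∀ {X Y : 𝒞} (u : X ⟶ Y), Hp X ≫ (G.map u).f (i+1) = (F.map u).f i ≫ Hp Y)
    (hdd : ∀ (X : 𝒞) (y : (F.obj X).X (i+1)),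
      (G.obj X).d (i+1) i (Hp X ((F.obj X).d (i+1) i y)) =
        (τ.app X).f i ((F.obj X).d (i+1) i y) - (τ'.app X).f i ((F.obj X).d (i+1) i y)) :
    ∃ Hc : ∀ X : 𝒞, (F.obj X).X (i+1) ⟶ (G.obj X).X (i+2),
      (∀ {X Y : 𝒞} (u : X ⟶ Y), Hc X ≫ (G.map u).f (i+2) = (F.map u).f (i+1) ≫ Hc Y) ∧
      (∀ X : 𝒞, Hc X ≫ (G.obj X).d (i+2) (i+1) + (F.obj X).d (i+1) i ≫ Hp X
          = (τ.app X).f (i+1) - (τ'.app X).f (i+1)) := by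
  set E : ∀ X : 𝒞, (F.obj X).X (i+1) ⟶ (G.obj X).X (i+1) :=
    fun X => (τ.app X).f (i+1) - (τ'.app X).f (i+1) - (F.obj X).d (i+1) i ≫ Hp X with hEdef
  have hE : ∀ {X Y : 𝒞} (u : X ⟶ Y), E X ≫ (G.map u).f (i+1) = (F.map u).f (i+1) ≫ E Y := by
    intro X Y u
    rw [hEdef]
    simp only [Preadditive.sub_comp, Preadditive.comp_sub, Category.assoc]
    rw [hn u]
    have h3 : (F.obj X).d (i+1) i ≫ (F.map u).f i = (F.map u).f (i+1) ≫ (F.obj Y).d (i+1) i :=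
      ((F.map u).comm (i+1) i).symm
    rw [← Category.assoc, h3, Category.assoc]
    have h4 := delta_nat τ τ' (i+1) u
    rw [Preadditive.sub_comp, Preadditive.comp_sub] at h4
    rw [h4]
  have hcyc : ∀ (a : ι) (b : Bs (i+1) a), (G.obj (Mo a)).d (i+1) i (E (Mo a) b.1) = 0 := by
    intro a b
    set M := Mo a
    have e1 : E M b.1 = (τ.app M).f (i+1) b.1 - (τ'.app M).f (i+1) b.1
        - Hp M ((F.obj M).d (i+1) i b.1) := by
      rw [hEdef]; rfl
    rw [e1, map_sub, map_sub]
    have e2 : (G.obj M).d (i+1) i ((τ.app M).f (i+1) b.1)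
        = (τ.app M).f i ((F.obj M).d (i+1) i b.1) := by
      have := congrArg (fun (f : (F.obj M).X (i+1) ⟶ (G.obj M).X i) => f b.1)
        ((τ.app M).comm (i+1) i)
      simp only [CategoryTheory.comp_apply, Function.comp_apply] at this
      exact this
    have e3 : (G.obj M).d (i+1) i ((τ'.app M).f (i+1) b.1)
        = (τ'.app M).f i ((F.obj M).d (i+1) i b.1) := by
      have := congrArg (fun (f : (F.obj M).X (i+1) ⟶ (G.obj M).X i) => f b.1)
        ((τ'.app M).comm (i+1) i)
      simp only [CategoryTheory.comp_apply, Function.comp_apply] at this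
      exact this
    rw [e2, e3, hdd M b.1]
    abel
  set s : ∀ a : ι, Bs (i+1) a → (G.obj (Mo a)).X (i+2) :=
    fun a b => (lift_exactAt (G.obj (Mo a)) i (hacy a i) (E (Mo a) b.1) (hcyc a b)).choose
    with hsdef
  have hs : ∀ (a : ι) (b : Bs (i+1) a), (G.obj (Mo a)).d (i+2) (i+1) (s a b) = E (Mo a) b.1 :=
    fun a b => (lift_exactAt (G.obj (Mo a)) i (hacy a i) (E (Mo a) b.1) (hcyc a b)).choose_spec
  refine ⟨mkH G hfree (i+1) s, fun {X Y} u => mkH_natural hfree (i+1) s u, fun X => ?_⟩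
  have h5 : mkH G hfree (i+1) s X ≫ (G.obj X).d (i+2) (i+1) = E X :=
    mkH_comp_d hfree (i+1) s E (fun {X Y} u => hE u) hs X
  rw [h5]
  show ((τ.app X).f (i+1) - (τ'.app X).f (i+1) - (F.obj X).d (i+1) i ≫ Hp X)
      + (F.obj X).d (i+1) i ≫ Hp X = (τ.app X).f (i+1) - (τ'.app X).f (i+1)
  abel


lemma exists_H (hfree : ∀ (X : 𝒞) (i : ℕ),
      LinearIndependent R
        (fun t : Σ (a : ι) (_ : Mo a ⟶ X), Bs i a => ((F.map t.2.1).f i) t.2.2.1) ∧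
      Submodule.span R
        (Set.range
          (fun t : Σ (a : ι) (_ : Mo a ⟶ X), Bs i a => ((F.map t.2.1).f i) t.2.2.1)) = ⊤)
    (τ τ' : F ⟶ G)
    (hδ0 : ∀ (a : ι) (x : (F.obj (Mo a)).X 0), ∃ y : (G.obj (Mo a)).X 1,
        (G.obj (Mo a)).d 1 0 y = (τ.app (Mo a)).f 0 x - (τ'.app (Mo a)).f 0 x)
    (hacy : ∀ (a : ι) (j : ℕ), IsZero ((G.obj (Mo a)).homology (j+1))) :
    ∃ H : ∀ (i : ℕ) (X : 𝒞), (F.obj X).X i ⟶ (G.obj X).X (i+1),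
      (∀ (i : ℕ) {X Y : 𝒞} (u : X ⟶ Y),
        H i X ≫ (G.map u).f (i+1) = (F.map u).f i ≫ H i Y) ∧
      (∀ X : 𝒞, H 0 X ≫ (G.obj X).d 1 0 = (τ.app X).f 0 - (τ'.app X).f 0) ∧
      (∀ (i : ℕ) (X : 𝒞), H (i+1) X ≫ (G.obj X).d (i+2) (i+1)
          + (F.obj X).d (i+1) i ≫ H i X = (τ.app X).f (i+1) - (τ'.app X).f (i+1)) := by
  classical
  obtain ⟨H0, hn0, hc0⟩ := existsZero hfree τ τ' hδ0
  -- the inductive data type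
  let Pk : ℕ → Type _ := fun i =>
    { p : (∀ X : 𝒞, (F.obj X).X i ⟶ (G.obj X).X (i+1))
          × (∀ X : 𝒞, (F.obj X).X (i+1) ⟶ (G.obj X).X (i+2)) //
        (∀ {X Y : 𝒞} (u : X ⟶ Y), p.1 X ≫ (G.map u).f (i+1) = (F.map u).f i ≫ p.1 Y) ∧
        (∀ {X Y : 𝒞} (u : X ⟶ Y), p.2 X ≫ (G.map u).f (i+2) = (F.map u).f (i+1) ≫ p.2 Y) ∧
        (∀ X : 𝒞, p.2 X ≫ (G.obj X).d (i+2) (i+1) + (F.obj X).d (i+1) i ≫ p.1 X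
            = (τ.app X).f (i+1) - (τ'.app X).f (i+1)) }
  -- from the pair commutation, the "d ∘ H ∘ d" identity for the top map
  have hddFrom : ∀ (i : ℕ) (p : Pk i) (X : 𝒞) (y : (F.obj X).X (i+2)),
      (G.obj X).d (i+2) (i+1) (p.1.2 X ((F.obj X).d (i+2) (i+1) y)) =
        (τ.app X).f (i+1) ((F.obj X).d (i+2) (i+1) y)
          - (τ'.app X).f (i+1) ((F.obj X).d (i+2) (i+1) y) := by
    intro i p X y
    have h1 : (G.obj X).d (i+2) (i+1) (p.1.2 X ((F.obj X).d (i+2) (i+1) y))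
        + p.1.1 X ((F.obj X).d (i+1) i ((F.obj X).d (i+2) (i+1) y))
        = (τ.app X).f (i+1) ((F.obj X).d (i+2) (i+1) y)
          - (τ'.app X).f (i+1) ((F.obj X).d (i+2) (i+1) y) := congrArg
      (fun (f : (F.obj X).X (i+1) ⟶ (G.obj X).X (i+1)) => f ((F.obj X).d (i+2) (i+1) y))
      (p.2.2.2 X)
    have h2 : (F.obj X).d (i+1) i ((F.obj X).d (i+2) (i+1) y) = 0 :=
      congrArg (fun (f : (F.obj X).X (i+2) ⟶ (F.obj X).X i) => f y)
      ((F.obj X).d_comp_d (i+2) (i+1) i)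
    rw [h2, map_zero, add_zero] at h1
    exact h1
  have hdd0 : ∀ (X : 𝒞) (y : (F.obj X).X 1),
      (G.obj X).d 1 0 (H0 X ((F.obj X).d 1 0 y)) =
        (τ.app X).f 0 ((F.obj X).d 1 0 y) - (τ'.app X).f 0 ((F.obj X).d 1 0 y) := by
    intro X y
    have h1 : (G.obj X).d 1 0 (H0 X ((F.obj X).d 1 0 y)) =
        (τ.app X).f 0 ((F.obj X).d 1 0 y) - (τ'.app X).f 0 ((F.obj X).d 1 0 y) := congrArg
      (fun (f : (F.obj X).X 0 ⟶ (G.obj X).X 0) => f ((F.obj X).d 1 0 y)) (hc0 X)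
    exact h1
  obtain ⟨H1, hn1, hc1⟩ := existsStep hfree τ τ' hacy 0 H0 hn0 hdd0
  let base : Pk 0 := ⟨⟨H0, H1⟩, fun {X Y} u => hn0 u, fun {X Y} u => hn1 u, hc1⟩
  let step : ∀ (i : ℕ), Pk i → Pk (i+1) := fun i p =>
    ⟨⟨p.1.2, (existsStep hfree τ τ' hacy (i+1) p.1.2 p.2.2.1 (hddFrom i p)).choose⟩,
      p.2.2.1,
      (existsStep hfree τ τ' hacy (i+1) p.1.2 p.2.2.1 (hddFrom i p)).choose_spec.1,
      (existsStep hfree τ τ' hacy (i+1) p.1.2 p.2.2.1 (hddFrom i p)).choose_spec.2⟩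
  let D : ∀ i : ℕ, Pk i := fun i => Nat.rec base step i
  refine ⟨fun i => (D i).1.1, fun i {X Y} u => (D i).2.1 u, hc0, fun i X => ?_⟩
  exact (D i).2.2.2 X

end AcyclicModelsAux

/-- (Acyclic model theorem, uniqueness part.)  With `F` free and `G`
acyclic on the models `ℳ` as in the acyclic model theorem, any two natural transformations
`τ, τ' : F ⟶ G` inducing the same map in degree-0 homology are naturally chain homotopic:
there are chain homotopies `h_X` from `τ_X` to `τ'_X`, with components
`(h_X)_i : F_i(X) → G_{i+1}(X)`, satisfying the naturality condition
`G_{i+1}(u) ∘ (h_X)_i = (h_Y)_i ∘ F_i(u)` for every `u : X ⟶ Y` and `i ≥ 0`. -/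
theorem acyclic_models_natural_homotopy {R : Type u} [CommRing R] {𝒞 : Type*} [Category 𝒞]
    (ℳ : Set 𝒞)
    (F G : 𝒞 ⥤ ChainComplex (ModuleCat.{u} R) ℕ)
    (ι : Type w) (Mo : ι → 𝒞) (hMo : ∀ a : ι, Mo a ∈ ℳ)
    (Bs : ∀ (i : ℕ) (a : ι), Set ((F.obj (Mo a)).X i))
    (hfree : ∀ (X : 𝒞) (i : ℕ),
      LinearIndependent R
        (fun t : Σ (a : ι) (_ : Mo a ⟶ X), Bs i a => ((F.map t.2.1).f i) t.2.2.1) ∧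
      Submodule.span R
        (Set.range
          (fun t : Σ (a : ι) (_ : Mo a ⟶ X), Bs i a => ((F.map t.2.1).f i) t.2.2.1)) = ⊤)
    (hacyclic : ∀ M ∈ ℳ, ∀ i : ℕ, 1 ≤ i → IsZero ((G.obj M).homology i))
    (τ τ' : F ⟶ G)
    (h₀ : ∀ X : 𝒞,
      (HomologicalComplex.homologyFunctor (ModuleCat.{u} R) (ComplexShape.down ℕ) 0).map
          (τ.app X) =
        (HomologicalComplex.homologyFunctor (ModuleCat.{u} R) (ComplexShape.down ℕ) 0).map
          (τ'.app X)) :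
    ∃ h : ∀ X : 𝒞, Homotopy (τ.app X) (τ'.app X),
      ∀ {X Y : 𝒞} (u : X ⟶ Y) (i : ℕ),
        (h X).hom i (i + 1) ≫ (G.map u).f (i + 1) =
          (F.map u).f i ≫ (h Y).hom i (i + 1) := by
  classical
  have hδ0 : ∀ (a : ι) (x : (F.obj (Mo a)).X 0), ∃ y : (G.obj (Mo a)).X 1,
      (G.obj (Mo a)).d 1 0 y = (τ.app (Mo a)).f 0 x - (τ'.app (Mo a)).f 0 x := by
    intro a x
    have hmap : HomologicalComplex.homologyMap (τ.app (Mo a) - τ'.app (Mo a)) 0 = 0 := by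
      have h2 := (HomologicalComplex.homologyFunctor (ModuleCat.{u} R)
        (ComplexShape.down ℕ) 0).map_sub (f := τ.app (Mo a)) (g := τ'.app (Mo a))
      rw [h₀ (Mo a), sub_self] at h2
      rw [HomologicalComplex.homologyFunctor_map] at h2
      exact h2
    obtain ⟨y, hy⟩ := AcyclicModelsAux.lift_deg0 (F.obj (Mo a)) (G.obj (Mo a))
      (τ.app (Mo a) - τ'.app (Mo a)) hmap x
    refine ⟨y, ?_⟩
    rw [hy]
    show ((τ.app (Mo a) - τ'.app (Mo a)).f 0) x = _
    rw [HomologicalComplex.sub_f_apply]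
    rfl
  have hacy' : ∀ (a : ι) (j : ℕ), IsZero ((G.obj (Mo a)).homology (j+1)) :=
    fun a j => hacyclic (Mo a) (hMo a) (j+1) (Nat.succ_le_succ (Nat.zero_le j))
  obtain ⟨H, hnat, hc0, hcS⟩ := AcyclicModelsAux.exists_H hfree τ τ' hδ0 hacy'
  let hom : ∀ (X : 𝒞) (i j : ℕ), (F.obj X).X i ⟶ (G.obj X).X j := fun X i j =>
    if h : j = i + 1 then H i X ≫ ((G.obj X).XIsoOfEq h.symm).hom else 0
  have homEq : ∀ (X : 𝒞) (i : ℕ), hom X i (i+1) = H i X := by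
    intro X i
    show (if h : i+1 = i+1 then H i X ≫ ((G.obj X).XIsoOfEq h.symm).hom else 0) = H i X
    rw [dif_pos rfl]
    simp [HomologicalComplex.XIsoOfEq]
  let hh : ∀ X : 𝒞, Homotopy (τ.app X) (τ'.app X) := fun X =>
    { hom := hom X
      zero := fun i j hij => by
        rw [ComplexShape.down_Rel] at hij
        exact dif_neg (by omega)
      comm := fun i => by
        rcases i with _ | n
        · have e1 : dNext 0 (hom X) = 0 := by
            apply dNext_eq_zero
            rw [ChainComplex.next_nat_zero, ComplexShape.down_Rel]
            omega
          have e2 : prevD 0 (hom X) = hom X 0 (0+1) ≫ (G.obj X).d (0+1) 0 :=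
            prevD_eq (hom X) (show (ComplexShape.down ℕ).Rel (0+1) 0 by
              rw [ComplexShape.down_Rel])
          have h3 : H 0 X ≫ (G.obj X).d (0+1) 0 = (τ.app X).f 0 - (τ'.app X).f 0 := hc0 X
          rw [e1, e2, homEq X 0, h3]
          abel
        · have e1 : dNext (n+1) (hom X) = (F.obj X).d (n+1) n ≫ hom X n (n+1) :=
            dNext_eq (hom X) (show (ComplexShape.down ℕ).Rel (n+1) n by
              rw [ComplexShape.down_Rel])
          have e2 : prevD (n+1) (hom X)
              = hom X (n+1) (n+1+1) ≫ (G.obj X).d (n+1+1) (n+1) :=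
            prevD_eq (hom X) (show (ComplexShape.down ℕ).Rel (n+1+1) (n+1) by
              rw [ComplexShape.down_Rel])
          have h3 : H (n+1) X ≫ (G.obj X).d (n+1+1) (n+1) + (F.obj X).d (n+1) n ≫ H n X
              = (τ.app X).f (n+1) - (τ'.app X).f (n+1) := hcS n X
          have h4 : H (n+1) X ≫ (G.obj X).d (n+1+1) (n+1) + (F.obj X).d (n+1) n ≫ H n X
              + (τ'.app X).f (n+1) = (τ.app X).f (n+1) := by
            rw [h3]
            abel
          rw [e1, e2, homEq X n, homEq X (n+1), ← h4]
          abel }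
  refine ⟨hh, ?_⟩
  intro X Y u i
  show hom X i (i+1) ≫ (G.map u).f (i+1) = (F.map u).f i ≫ hom Y i (i+1)
  rw [homEq X i, homEq Y i]
  exact hnat i u
end
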